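/- arXiv:2312.15931 — 2 statements merged into one kernel-verified Lean document; each statement's English description precedes it below -/
import Mathlib

section
/- Let B be a standard Brownian motion and ε > 0. There exists a nonnegative random variable M_B such that M_B² admits exponential moments and, almost surely, for all 0 < h < t < ∞, the modulus of continuity satisfies ω_B(t, h) ≤ M_B · w(t, h), where ω_B(t, h) := sup_{0 ≤ u < v ≤ t, |v−u| ≤ h} |B_v − B_u|. -/
open MeasureTheory ProbabilityTheory

/-- `B` is a standard one-dimensional Brownian motion on `(Ω, P)`. -/
def IsBrownianMotion {Ω : Type*} [MeasurableSpace Ω] (P : Measure Ω) (B : ℝ → Ω → ℝ) : Prop :=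
  (∀ t : ℝ, Measurable (B t)) ∧
  (∀ ω, B 0 ω = 0) ∧
  (∀ ω, Continuous fun t => B t ω) ∧
  (∀ s t : ℝ, 0 ≤ s → s ≤ t →
    P.map (fun ω => B t ω - B s ω) = gaussianReal 0 (Real.toNNReal (t - s))) ∧
  (∀ (n : ℕ) (u : Fin (n + 1) → ℝ), Monotone u → 0 ≤ u 0 →
    iIndepFun (m := fun _ => Real.measurableSpace)
      (fun i : Fin n => fun ω => B (u i.succ) ω - B (u i.castSucc) ω) P)

/-- The function `w(t,h) = √(h (1 + ln(t/h) + ε|ln t|))` for `0 < h ≤ t`,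
and `w(t,h) = w(t,t)` for `0 < t < h`; equivalently the formula with `h` replaced
by `min t h`. -/
noncomputable def w (ε t h : ℝ) : ℝ :=
  Real.sqrt (min t h * (1 + Real.log (t / min t h) + ε * |Real.log t|))

set_option maxHeartbeats 1000000

open Real Filter Topology

section BMaux

/-- auxiliary log weight -/
noncomputable def gfun (j : ℤ) (k : ℕ) : ℝ :=
  1 + Real.log (2 + |(j : ℝ)|) + Real.log (2 + (k : ℝ))

lemma half_le_log_two : (1/2 : ℝ) ≤ Real.log 2 := by
  have := Real.log_two_gt_d9; linarith

lemma gfun_ge_two (j : ℤ) (k : ℕ) : 2 ≤ gfun j k := by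
  have h1 : Real.log 2 ≤ Real.log (2 + |(j:ℝ)|) :=
    Real.log_le_log (by norm_num) (by linarith [abs_nonneg ((j:ℝ))])
  have h2 : Real.log 2 ≤ Real.log (2 + (k:ℝ)) :=
    Real.log_le_log (by norm_num) (by linarith [Nat.cast_nonneg (α := ℝ) k])
  have := half_le_log_two
  unfold gfun; linarith

lemma gaussian_exp_bound (δ G : ℝ) (hδ : 0 < δ) (hG : 2 ≤ G) :
    ∫⁻ x, ENNReal.ofReal
        (if 3 * (Real.sqrt δ * Real.sqrt G) ≤ |x| then Real.exp (x ^ 2 / (16 * (δ * G))) else 0)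
        ∂(gaussianReal 0 δ.toNNReal)
      ≤ ENNReal.ofReal (Real.sqrt 2 * Real.exp (-(9/8) * G)) := by
  have hG0 : 0 < G := by linarith
  have hv : δ.toNNReal ≠ 0 := by
    simp only [ne_eq, Real.toNNReal_eq_zero, not_le]; exact hδ
  have hvc : ((δ.toNNReal : ℝ)) = δ := Real.coe_toNNReal δ hδ.le
  have hmeasset : MeasurableSet {x : ℝ | 3 * (Real.sqrt δ * Real.sqrt G) ≤ |x|} :=
    measurableSet_le measurable_const measurable_abs
  have hφ : Measurable fun x : ℝ => ENNReal.ofReal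
      (if 3 * (Real.sqrt δ * Real.sqrt G) ≤ |x| then Real.exp (x ^ 2 / (16 * (δ * G))) else 0) := by
    apply Measurable.ennreal_ofReal
    exact Measurable.ite hmeasset (by fun_prop) measurable_const
  rw [gaussianReal_of_var_ne_zero 0 hv,
    lintegral_withDensity_eq_lintegral_mul volume (measurable_gaussianPDF 0 _) hφ]
  have hptwise : ∀ x : ℝ,
      (gaussianPDF 0 δ.toNNReal * fun x : ℝ => ENNReal.ofReal
        (if 3 * (Real.sqrt δ * Real.sqrt G) ≤ |x| then Real.exp (x ^ 2 / (16 * (δ * G))) else 0)) x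
      ≤ ENNReal.ofReal (Real.exp (-(9/8) * G) *
          ((Real.sqrt (2 * Real.pi * δ))⁻¹ * Real.exp (-(1/(4*δ)) * x ^ 2))) := by
    intro x
    simp only [Pi.mul_apply, gaussianPDF, gaussianPDFReal, hvc, sub_zero]
    rw [← ENNReal.ofReal_mul (by positivity)]
    apply ENNReal.ofReal_le_ofReal
    by_cases hx : 3 * (Real.sqrt δ * Real.sqrt G) ≤ |x|
    · rw [if_pos hx]
      have hx2 : 9 * (δ * G) ≤ x ^ 2 := by
        have h9 : (3 * (Real.sqrt δ * Real.sqrt G)) ^ 2 ≤ |x| ^ 2 := by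
          apply sq_le_sq' _ hx
          have : 0 ≤ 3 * (Real.sqrt δ * Real.sqrt G) := by positivity
          linarith [abs_nonneg x]
        rw [mul_pow, mul_pow, Real.sq_sqrt hδ.le, Real.sq_sqrt hG0.le, sq_abs] at h9
        linarith
      have hexp : Real.exp (-x^2/(2*δ)) * Real.exp (x ^ 2 / (16 * (δ * G)))
          ≤ Real.exp (-(9/8) * G) * Real.exp (-(1/(4*δ)) * x ^ 2) := by
        rw [← Real.exp_add, ← Real.exp_add]
        apply Real.exp_le_exp.mpr
        have hδ' : δ ≠ 0 := ne_of_gt hδ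
        have hG' : G ≠ 0 := ne_of_gt hG0
        have key : 18 * δ * G ^ 2 ≤ x ^ 2 * (4 * G - 1) := by nlinarith [hx2, hG, hδ.le]
        rw [div_add_div _ _ (by positivity : (2*δ) ≠ 0) (by positivity : (16*(δ*G)) ≠ 0),
          div_le_iff₀ (by positivity)]
        have expand : (-(9 / 8) * G + -(1 / (4 * δ)) * x ^ 2) * (2 * δ * (16 * (δ * G)))
            = -36 * (δ^2 * G^2) - 8 * (δ * G * x^2) := by field_simp; ring
        rw [expand]
        nlinarith [mul_pos hδ hG0, sq_nonneg x, hδ.le, hG0.le, mul_nonneg (mul_nonneg hδ.le hG0.le) (sq_nonneg x)]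
      calc (Real.sqrt (2 * Real.pi * δ))⁻¹ * Real.exp (-x^2/(2*δ)) * Real.exp (x ^ 2 / (16 * (δ * G)))
          = (Real.sqrt (2 * Real.pi * δ))⁻¹ * (Real.exp (-x^2/(2*δ)) * Real.exp (x ^ 2 / (16 * (δ * G)))) := by ring
        _ ≤ (Real.sqrt (2 * Real.pi * δ))⁻¹ * (Real.exp (-(9/8) * G) * Real.exp (-(1/(4*δ)) * x ^ 2)) := by
            apply mul_le_mul_of_nonneg_left hexp (by positivity)
        _ = Real.exp (-(9/8) * G) * ((Real.sqrt (2 * Real.pi * δ))⁻¹ * Real.exp (-(1/(4*δ)) * x ^ 2)) := by ring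
    · rw [if_neg hx]; simp only [mul_zero]; positivity
  calc ∫⁻ x, (gaussianPDF 0 δ.toNNReal * fun x : ℝ => ENNReal.ofReal
        (if 3 * (Real.sqrt δ * Real.sqrt G) ≤ |x| then Real.exp (x ^ 2 / (16 * (δ * G))) else 0)) x
      ≤ ∫⁻ x, ENNReal.ofReal (Real.exp (-(9/8) * G) *
          ((Real.sqrt (2 * Real.pi * δ))⁻¹ * Real.exp (-(1/(4*δ)) * x ^ 2))) := lintegral_mono hptwise
    _ = ENNReal.ofReal (Real.exp (-(9/8) * G) * ((Real.sqrt (2 * Real.pi * δ))⁻¹ * Real.sqrt (Real.pi / (1/(4*δ))))) := by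
        rw [← ofReal_integral_eq_lintegral_ofReal]
        · rw [integral_const_mul, integral_const_mul, integral_gaussian]
        · apply Integrable.const_mul
          exact (integrable_exp_neg_mul_sq (by positivity)).const_mul _
        · apply ae_of_all; intro x; positivity
    _ ≤ ENNReal.ofReal (Real.sqrt 2 * Real.exp (-(9/8) * G)) := by
        apply ENNReal.ofReal_le_ofReal
        have h1 : Real.sqrt (Real.pi / (1/(4*δ))) = Real.sqrt 2 * Real.sqrt (2 * Real.pi * δ) := by
          rw [← Real.sqrt_mul (by norm_num)]
          congr 1; field_simp; ring
        rw [h1]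
        have h2 : (Real.sqrt (2 * Real.pi * δ))⁻¹ * (Real.sqrt 2 * Real.sqrt (2 * Real.pi * δ))
            = Real.sqrt 2 := by
          field_simp
        rw [h2, mul_comm]

lemma summable_aux_nat : Summable (fun n : ℕ => (2 + (n:ℝ)) ^ (-(9/8) : ℝ)) := by
  rw [← summable_nat_add_iff 1]
  have hs : Summable (fun n : ℕ => 1 / ((n:ℝ) + 1) ^ ((9/8) : ℝ)) := by
    have := (Real.summable_one_div_nat_rpow (p := (9/8))).mpr (by norm_num)
    rw [← summable_nat_add_iff 1] at this
    convert this using 2 with n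
    case e'_3 => rfl
    push_cast
    ring_nf
  apply hs.of_nonneg_of_le
  · intro n; positivity
  · intro n
    have h1 : ((n:ℝ) + 1) ^ (-(9/8) : ℝ) = 1 / ((n:ℝ) + 1) ^ ((9/8) : ℝ) := by
      rw [Real.rpow_neg (by positivity), one_div]
    rw [← h1]
    apply Real.rpow_le_rpow_of_nonpos (by positivity) (by push_cast; linarith) (by norm_num)

lemma summable_aux_int : Summable (fun j : ℤ => (2 + |(j:ℝ)|) ^ (-(9/8) : ℝ)) := by
  apply Summable.of_nat_of_neg
  · convert summable_aux_nat using 2 with n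
    case e'_3 => rfl
    rw [abs_of_nonneg (by positivity : (0:ℝ) ≤ ((n:ℤ):ℝ))]
    norm_num
  · convert summable_aux_nat using 2 with n
    case e'_3 => rfl
    rw [show (((-(n:ℤ)):ℤ):ℝ) = -(n:ℝ) by push_cast; ring, abs_neg,
      abs_of_nonneg (by positivity : (0:ℝ) ≤ (n:ℝ))]

lemma exp_gfun_factor (j : ℤ) (k : ℕ) :
    Real.exp (-(9/8) * gfun j k)
      = Real.exp (-(9/8)) * ((2 + |(j:ℝ)|) ^ (-(9/8):ℝ) * (2 + (k:ℝ)) ^ (-(9/8):ℝ)) := by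
  unfold gfun
  rw [Real.rpow_def_of_pos (by positivity), Real.rpow_def_of_pos (by positivity),
    ← Real.exp_add, ← Real.exp_add]
  ring_nf

lemma Ctot_lt_top :
    (∑' (p : ℤ × ℕ), ENNReal.ofReal (Real.sqrt 2 * Real.exp (-(9/8) * gfun p.1 p.2))) < ⊤ := by
  have heq : ∀ p : ℤ × ℕ, ENNReal.ofReal (Real.sqrt 2 * Real.exp (-(9/8) * gfun p.1 p.2))
      = ENNReal.ofReal (Real.sqrt 2 * Real.exp (-(9/8)))
        * (ENNReal.ofReal ((2 + |(p.1:ℝ)|) ^ (-(9/8):ℝ)) * ENNReal.ofReal ((2 + (p.2:ℝ)) ^ (-(9/8):ℝ))) := by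
    intro p
    rw [← ENNReal.ofReal_mul (by positivity), ← ENNReal.ofReal_mul (by positivity),
      exp_gfun_factor]
    ring_nf
  simp_rw [heq]
  rw [ENNReal.tsum_mul_left]
  apply ENNReal.mul_lt_top ENNReal.ofReal_lt_top
  rw [ENNReal.tsum_prod (f := fun (j:ℤ) (k:ℕ) => ENNReal.ofReal ((2 + |(j:ℝ)|) ^ (-(9/8):ℝ)) * ENNReal.ofReal ((2 + (k:ℝ)) ^ (-(9/8):ℝ)))]
  have hk : (∑' k : ℕ, ENNReal.ofReal ((2 + (k:ℝ)) ^ (-(9/8):ℝ))) < ⊤ := by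
    rw [← ENNReal.ofReal_tsum_of_nonneg (fun k => by positivity) summable_aux_nat]
    exact ENNReal.ofReal_lt_top
  have hstep : ∀ j : ℤ, (∑' k : ℕ, ENNReal.ofReal ((2 + |(j:ℝ)|) ^ (-(9/8):ℝ))
      * ENNReal.ofReal ((2 + (k:ℝ)) ^ (-(9/8):ℝ)))
      = ENNReal.ofReal ((2 + |(j:ℝ)|) ^ (-(9/8):ℝ)) * (∑' k : ℕ, ENNReal.ofReal ((2 + (k:ℝ)) ^ (-(9/8):ℝ))) := by
    intro j; rw [ENNReal.tsum_mul_left]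
  simp_rw [hstep]
  rw [ENNReal.tsum_mul_right]
  apply ENNReal.mul_lt_top _ hk
  rw [← ENNReal.ofReal_tsum_of_nonneg (fun j => by positivity) summable_aux_int]
  exact ENNReal.ofReal_lt_top

lemma log_one_add_le {ε x : ℝ} (hε : 0 < ε) (hx : 0 ≤ x) :
    Real.log (1 + x) ≤ ε * x + (ε + 1/ε) := by
  have hs : Real.sqrt (1+x) ^ 2 = 1 + x := Real.sq_sqrt (by linarith)
  have hs0 : 0 < Real.sqrt (1+x) := Real.sqrt_pos.mpr (by linarith)
  have h1 : Real.log (1+x) = 2 * Real.log (Real.sqrt (1+x)) := by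
    conv_lhs => rw [← hs]
    rw [Real.log_pow]
    push_cast; ring
  have h2 : Real.log (Real.sqrt (1+x)) ≤ Real.sqrt (1+x) - 1 :=
    Real.log_le_sub_one_of_pos hs0
  have h3 : 2 * Real.sqrt (1+x) ≤ ε * (1+x) + 1/ε := by
    have hsq := sq_nonneg (ε * Real.sqrt (1+x) - 1)
    have h4 : ε * (2 * Real.sqrt (1+x)) ≤ ε * (ε * (1+x) + 1/ε) := by
      have he : ε * (ε * (1+x) + 1/ε) = ε^2 * (1+x) + 1 := by
        field_simp
      nlinarith [hsq, hs]
    exact le_of_mul_le_mul_left h4 hε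
  linarith

lemma sqrt_one_add_le {i : ℝ} (hi : 0 ≤ i) :
    Real.sqrt (1 + i) ≤ 3 * (2:ℝ) ^ (i/4) := by
  have h1 : (1 + i) ≤ 9 * (2:ℝ) ^ (i/2) := by
    have h2 : (2:ℝ) ^ (i/2) = Real.exp ((i/2) * Real.log 2) := by
      rw [Real.rpow_def_of_pos (by norm_num)]; ring_nf
    have h3 : 1 + (i/2) * Real.log 2 ≤ Real.exp ((i/2) * Real.log 2) :=
      Real.add_one_le_exp _ |>.trans_eq' (by ring)
    have h4 : (1:ℝ)/2 ≤ Real.log 2 := by have := Real.log_two_gt_d9; linarith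
    have h5 : i/4 ≤ (i/2) * Real.log 2 := by nlinarith
    nlinarith [h2, h3]
  calc Real.sqrt (1+i) ≤ Real.sqrt (9 * (2:ℝ)^(i/2)) := Real.sqrt_le_sqrt h1
    _ = 3 * (2:ℝ)^(i/4) := by
        rw [Real.sqrt_mul (by norm_num), show (9:ℝ) = 3^2 by norm_num, Real.sqrt_sq (by norm_num)]
        congr 1
        rw [Real.sqrt_eq_rpow, ← Real.rpow_mul (by norm_num : (0:ℝ) ≤ 2)]
        congr 1; ring

lemma gfun_bound {ε t h : ℝ} (hε : 0 < ε) (hh : 0 < h) (hht : h < t)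
    {j₀ j : ℤ} (hj : j₀ ≤ j) (hj₀l : (2:ℝ)^j₀ ≤ 1/h) (hj₀r : 1/h < (2:ℝ)^(j₀+1))
    {k : ℕ} (hk : (k:ℝ) * (2:ℝ)^(-j) ≤ t) :
    gfun j k ≤ (5 + ε + 1/ε) * (1 + Real.log (t/h) + ε * |Real.log t|)
      * (1 + ((j - j₀ : ℤ):ℝ)) := by
  have ht0 : 0 < t := hh.trans hht
  set L := Real.log (t/h) with hLdef
  set X := |Real.log t| with hXdef
  set i := ((j - j₀ : ℤ):ℝ) with hidef
  have hi : 0 ≤ i := by rw [hidef]; exact_mod_cast sub_nonneg.mpr hj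
  have hL : 0 ≤ L := Real.log_nonneg ((one_le_div hh).mpr hht.le)
  have hX : 0 ≤ X := abs_nonneg _
  have h2jpos : ∀ m : ℤ, (0:ℝ) < (2:ℝ)^m := fun m => zpow_pos (by norm_num) m
  -- (a) bound on log (2 + k)
  have hk2 : (k:ℝ) ≤ t * (2:ℝ)^j := by
    have := mul_le_mul_of_nonneg_right hk (h2jpos j).le
    rwa [mul_assoc, ← zpow_add₀ (by norm_num : (2:ℝ) ≠ 0), neg_add_cancel, zpow_zero, mul_one] at this
  have hsplit : (2:ℝ)^j = (2:ℝ)^j₀ * (2:ℝ)^(j - j₀) := by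
    rw [← zpow_add₀ (by norm_num : (2:ℝ) ≠ 0)]; ring_nf
  have hzp1 : (1:ℝ) ≤ (2:ℝ)^(j-j₀) := by
    calc (1:ℝ) = (2:ℝ)^(0:ℤ) := (zpow_zero 2).symm
      _ ≤ (2:ℝ)^(j-j₀) := zpow_le_zpow_right₀ (by norm_num) (by omega)
  have ha : Real.log (2 + (k:ℝ)) ≤ 2 + L + i := by
    have h1 : (2:ℝ) + k ≤ (2 + t/h) * (2:ℝ)^(j-j₀) := by
      have e1 : t * (2:ℝ)^j ≤ (t/h) * (2:ℝ)^(j-j₀) := by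
        rw [hsplit, ← mul_assoc]
        apply mul_le_mul_of_nonneg_right _ (h2jpos _).le
        calc t * (2:ℝ)^j₀ ≤ t * (1/h) := by
              exact mul_le_mul_of_nonneg_left hj₀l ht0.le
          _ = t/h := by ring
      nlinarith [hzp1, hk2, (h2jpos (j - j₀)).le]
    have h2 : (2:ℝ) + t/h ≤ 3 * (t/h) := by
      have : (1:ℝ) ≤ t/h := (one_le_div hh).mpr hht.le
      linarith
    calc Real.log (2 + (k:ℝ)) ≤ Real.log ((3 * (t/h)) * (2:ℝ)^(j-j₀)) := by
          apply Real.log_le_log (by positivity)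
          calc (2:ℝ) + k ≤ (2 + t/h) * (2:ℝ)^(j-j₀) := h1
            _ ≤ (3*(t/h)) * (2:ℝ)^(j-j₀) := mul_le_mul_of_nonneg_right h2 (h2jpos _).le
      _ = Real.log 3 + L + (j - j₀ : ℤ) * Real.log 2 := by
          rw [Real.log_mul (by positivity) (by positivity), Real.log_mul (by norm_num) (by positivity),
            Real.log_zpow]
      _ ≤ 2 + L + i := by
          have l3 : Real.log 3 ≤ 2 := by
            have := Real.log_le_sub_one_of_pos (show (0:ℝ) < 3 by norm_num); linarith
          have l2 : Real.log 2 ≤ 1 := by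
            have := Real.log_le_sub_one_of_pos (show (0:ℝ) < 2 by norm_num); linarith
          have : (j - j₀ : ℤ) * Real.log 2 ≤ i := by
            rw [hidef]
            calc ((j - j₀ : ℤ):ℝ) * Real.log 2 ≤ ((j - j₀:ℤ):ℝ) * 1 :=
                  mul_le_mul_of_nonneg_left l2 hi
              _ = _ := mul_one _
          linarith
  -- (b) bound on log (2 + |j|)
  have habsj : |(j:ℝ)| ≤ |(j₀:ℝ)| + i := by
    have : |j| ≤ |j₀| + (j - j₀) := by
      rcases abs_cases j with ⟨e1,e2⟩|⟨e1,e2⟩ <;> rcases abs_cases j₀ with ⟨g1,g2⟩|⟨g1,g2⟩ <;> omega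
    calc |(j:ℝ)| = ((|j|:ℤ):ℝ) := by rw [Int.cast_abs]
      _ ≤ ((|j₀| + (j - j₀) : ℤ):ℝ) := by exact_mod_cast this
      _ = |(j₀:ℝ)| + i := by rw [hidef]; push_cast; ring
  have hj₀abs : |(j₀:ℝ)| ≤ 1 + 2 * |Real.log h| := by
    have hlb : ∀ m : ℤ, Real.logb 2 ((2:ℝ)^m) = (m:ℝ) := by
      intro m
      rw [Real.logb, Real.log_zpow, mul_div_assoc,
        div_self (ne_of_gt (Real.log_pos one_lt_two)), mul_one]
    have hup : (j₀:ℝ) ≤ Real.logb 2 (1/h) := by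
      rw [← hlb j₀]
      exact Real.logb_le_logb_of_le one_lt_two (h2jpos j₀) hj₀l
    have hlo : Real.logb 2 (1/h) < (j₀:ℝ) + 1 := by
      have : Real.logb 2 (1/h) < Real.logb 2 ((2:ℝ)^(j₀+1)) :=
        Real.logb_lt_logb one_lt_two (by positivity) hj₀r
      rwa [hlb (j₀+1), Int.cast_add, Int.cast_one] at this
    have heq : Real.logb 2 (1/h) = - Real.log h / Real.log 2 := by
      rw [Real.logb, Real.log_div (by norm_num) (ne_of_gt hh), Real.log_one]
      ring
    have hlog2 : (1:ℝ)/2 ≤ Real.log 2 := by have := Real.log_two_gt_d9; linarith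
    have habslogb : |Real.logb 2 (1/h)| ≤ 2 * |Real.log h| := by
      rw [heq, abs_div, abs_neg, abs_of_pos (by linarith : (0:ℝ) < Real.log 2)]
      rw [div_le_iff₀ (by linarith)]
      nlinarith [abs_nonneg (Real.log h)]
    have h1 : (j₀:ℝ) ≤ |Real.logb 2 (1/h)| := hup.trans (le_abs_self _)
    have h2 : -(j₀:ℝ) ≤ |Real.logb 2 (1/h)| + 1 := by
      have := neg_abs_le (Real.logb 2 (1/h))
      linarith
    rw [abs_le]; constructor <;> linarith
  have hlogh : |Real.log h| ≤ X + L := by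
    have : Real.log (t/h) = Real.log t - Real.log h :=
      Real.log_div (ne_of_gt ht0) (ne_of_gt hh)
    have h1 : Real.log h = Real.log t - L := by rw [hLdef, this]; ring
    rw [h1]
    calc |Real.log t - L| ≤ |Real.log t| + |L| := abs_sub _ _
      _ = X + L := by rw [abs_of_nonneg hL]
  have hb : Real.log (2 + |(j:ℝ)|) ≤ 2 + (ε * (X + L) + (ε + 1/ε)) + i := by
    have h1 : 2 + |(j:ℝ)| ≤ (2 + |(j₀:ℝ)|) * (1 + i) := by
      nlinarith [abs_nonneg ((j₀:ℝ)), habsj, hi]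
    have h2 : (2:ℝ) + |(j₀:ℝ)| ≤ 3 * (1 + (X + L)) := by
      have := hj₀abs; have := hlogh; nlinarith [abs_nonneg (Real.log h)]
    calc Real.log (2 + |(j:ℝ)|) ≤ Real.log ((3 * (1 + (X+L))) * (1 + i)) := by
          apply Real.log_le_log (by positivity)
          calc (2:ℝ) + |(j:ℝ)| ≤ (2 + |(j₀:ℝ)|) * (1+i) := h1
            _ ≤ (3 * (1 + (X+L))) * (1+i) := mul_le_mul_of_nonneg_right h2 (by linarith)
      _ = Real.log 3 + Real.log (1 + (X+L)) + Real.log (1 + i) := by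
          rw [Real.log_mul (by positivity) (by positivity), Real.log_mul (by norm_num) (by positivity)]
      _ ≤ 2 + (ε * (X + L) + (ε + 1/ε)) + i := by
          have l3 : Real.log 3 ≤ 2 := by
            have := Real.log_le_sub_one_of_pos (show (0:ℝ) < 3 by norm_num); linarith
          have l1 : Real.log (1 + (X+L)) ≤ ε * (X+L) + (ε + 1/ε) :=
            log_one_add_le hε (by linarith)
          have l2 : Real.log (1 + i) ≤ i := by
            have := Real.log_le_sub_one_of_pos (show (0:ℝ) < 1 + i by linarith); linarith
          linarith
  -- combine
  have hεinv : 0 < 1/ε := by positivity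
  unfold gfun
  set C := 5 + ε + 1/ε with hCdef
  have hC2 : 2 ≤ C := by rw [hCdef]; linarith
  have hD1 : 1 ≤ 1 + L + ε * X := by nlinarith
  have expand : C * (1 + L + ε*X) * (1 + i) = C + C*L + C*(ε*X) + C*(1+L+ε*X)*i := by ring
  have hLX : 0 ≤ L + ε*X := by nlinarith [mul_nonneg hε.le hX]
  have hDi : C * i ≤ C * (1+L+ε*X) * i := by
    nlinarith [mul_nonneg (mul_nonneg (show (0:ℝ) ≤ C by linarith) hi) hLX]
  have t1 : (1+ε) * L ≤ C * L := mul_le_mul_of_nonneg_right (by rw [hCdef]; linarith) hL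
  have t2 : ε * X ≤ C * (ε*X) := le_mul_of_one_le_left (by positivity) (by linarith)
  have t3 : 2 * i ≤ C * i := mul_le_mul_of_nonneg_right hC2 hi
  clear_value L X i C
  linarith [ha, hb, t1, t2, t3, hDi, expand]

lemma floor_two_mul_cases (y : ℝ) : ⌊2*y⌋ = 2*⌊y⌋ ∨ ⌊2*y⌋ = 2*⌊y⌋+1 := by
  have h1 : 2*⌊y⌋ ≤ ⌊2*y⌋ := by
    apply Int.le_floor.mpr; push_cast; linarith [Int.floor_le y]
  have h2 : ⌊2*y⌋ < 2*⌊y⌋ + 2 := by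
    apply Int.floor_lt.mpr; push_cast; linarith [Int.lt_floor_add_one y]
  omega

/-- dyadic approximation of `x` at level `J` -/
noncomputable def dy (x : ℝ) (J : ℤ) : ℝ := ((⌊(2:ℝ)^J * x⌋ : ℤ) : ℝ) * (2:ℝ)^(-J)

lemma two_zpow_pos (m : ℤ) : (0:ℝ) < (2:ℝ)^m := zpow_pos (by norm_num) m

lemma dy_le {x : ℝ} (J : ℤ) : dy x J ≤ x := by
  unfold dy
  have h := Int.floor_le ((2:ℝ)^J * x)
  have h2 := mul_le_mul_of_nonneg_right h (two_zpow_pos (-J)).le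
  calc ((⌊(2:ℝ)^J * x⌋ : ℤ) : ℝ) * (2:ℝ)^(-J) ≤ ((2:ℝ)^J * x) * (2:ℝ)^(-J) := h2
    _ = x := by
      rw [mul_comm ((2:ℝ)^J) x, mul_assoc, ← zpow_add₀ (by norm_num : (2:ℝ) ≠ 0)]
      simp

lemma lt_dy_add {x : ℝ} (J : ℤ) : x - (2:ℝ)^(-J) < dy x J := by
  unfold dy
  have h := Int.sub_one_lt_floor ((2:ℝ)^J * x)
  have h2 := mul_lt_mul_of_pos_right h (two_zpow_pos (-J))
  calc x - (2:ℝ)^(-J) = ((2:ℝ)^J * x - 1) * (2:ℝ)^(-J) := by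
        rw [sub_mul, mul_comm ((2:ℝ)^J) x, mul_assoc, ← zpow_add₀ (by norm_num : (2:ℝ) ≠ 0)]
        simp
    _ < _ := h2

lemma dy_nonneg {x : ℝ} (hx : 0 ≤ x) (J : ℤ) : 0 ≤ dy x J := by
  unfold dy
  apply mul_nonneg _ (two_zpow_pos (-J)).le
  have : (0:ℤ) ≤ ⌊(2:ℝ)^J * x⌋ := Int.floor_nonneg.mpr (by positivity)
  exact_mod_cast this

/-- the dyadic step: from level `J` to level `J+1`. -/
lemma dy_step (f : ℝ → ℝ) (A : ℝ) (hA : 0 ≤ A)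
    (Hf : ∀ (j : ℤ) (k : ℕ), |f (((k:ℝ)+1) * (2:ℝ)^(-j)) - f ((k:ℝ) * (2:ℝ)^(-j))|
        ≤ A * Real.sqrt ((2:ℝ)^(-j)) * Real.sqrt (gfun j k))
    (x : ℝ) (hx : 0 ≤ x) (J : ℤ) :
    ∃ k : ℕ, (k:ℝ) * (2:ℝ)^(-(J+1)) ≤ x ∧
      |f (dy x (J+1)) - f (dy x J)| ≤ A * Real.sqrt ((2:ℝ)^(-(J+1))) * Real.sqrt (gfun (J+1) k) := by
  set y := (2:ℝ)^J * x with hy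
  have hy0 : 0 ≤ y := by positivity
  have hfl0 : (0:ℤ) ≤ ⌊y⌋ := Int.floor_nonneg.mpr hy0
  have h2y : (2:ℝ)^(J+1) * x = 2 * y := by
    rw [hy, zpow_add₀ (by norm_num : (2:ℝ) ≠ 0)]; ring
  refine ⟨(2*⌊y⌋).toNat, ?_, ?_⟩
  · have hc : (((2*⌊y⌋).toNat : ℤ):ℝ) = 2*(⌊y⌋:ℝ) := by
      rw [Int.toNat_of_nonneg (by omega)]; push_cast; ring
    have : ((2*⌊y⌋).toNat : ℝ) * (2:ℝ)^(-(J+1)) = dy x J := by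
      unfold dy
      rw [show (((2*⌊y⌋).toNat : ℕ):ℝ) = (((2*⌊y⌋).toNat : ℤ):ℝ) by push_cast; ring, hc]
      rw [show -(J+1) = -J + (-1:ℤ) by ring, zpow_add₀ (by norm_num : (2:ℝ) ≠ 0)]
      norm_num; ring
    rw [this]; exact dy_le J
  · have hc : (((2*⌊y⌋).toNat : ℕ):ℝ) = 2*(⌊y⌋:ℝ) := by
      rw [show (((2*⌊y⌋).toNat : ℕ):ℝ) = (((2*⌊y⌋).toNat : ℤ):ℝ) by push_cast; ring,
        Int.toNat_of_nonneg (by omega)]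
      push_cast; ring
    have hdyJ : dy x J = (((2*⌊y⌋).toNat : ℕ):ℝ) * (2:ℝ)^(-(J+1)) := by
      unfold dy
      rw [hc, show -(J+1) = -J + (-1:ℤ) by ring, zpow_add₀ (by norm_num : (2:ℝ) ≠ 0)]
      norm_num; ring
    rcases floor_two_mul_cases y with hcase | hcase
    · -- no move: dy x (J+1) = dy x J
      have : dy x (J+1) = dy x J := by
        unfold dy
        rw [h2y, hcase, ← hy]
        push_cast
        rw [show -(J+1) = -J + (-1:ℤ) by ring, zpow_add₀ (by norm_num : (2:ℝ) ≠ 0)]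
        norm_num
        ring
      rw [this, sub_self, abs_zero]
      positivity
    · -- move by one step
      have hdyJ1 : dy x (J+1) = ((((2*⌊y⌋).toNat : ℕ):ℝ) + 1) * (2:ℝ)^(-(J+1)) := by
        unfold dy
        rw [h2y, hcase, hc]
        push_cast
        ring
      rw [hdyJ1, hdyJ]
      exact Hf (J+1) (2*⌊y⌋).toNat

lemma chaining (f : ℝ → ℝ) (hf : Continuous f) (A : ℝ) (hA : 0 ≤ A)
    (Hf : ∀ (j : ℤ) (k : ℕ), |f (((k:ℝ)+1) * (2:ℝ)^(-j)) - f ((k:ℝ) * (2:ℝ)^(-j))|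
        ≤ A * Real.sqrt ((2:ℝ)^(-j)) * Real.sqrt (gfun j k))
    (ε : ℝ) (hε : 0 < ε) (t h u v : ℝ) (hh : 0 < h) (hht : h < t)
    (hu : 0 ≤ u) (huv : u < v) (hvt : v ≤ t) (hvuh : v - u ≤ h) :
    |f v - f u| ≤ (39 * Real.sqrt (2 * (5 + ε + 1/ε))) * A * w ε t h := by
  have ht0 : 0 < t := hh.trans hht
  set D := 1 + Real.log (t/h) + ε * |Real.log t| with hD
  have hL : 0 ≤ Real.log (t/h) := Real.log_nonneg ((one_le_div hh).mpr hht.le)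
  have hD1 : 1 ≤ D := by
    rw [hD]; nlinarith [mul_nonneg hε.le (abs_nonneg (Real.log t))]
  have hD0 : 0 ≤ D := by linarith
  have hCe0 : (0:ℝ) ≤ 5 + ε + 1/ε := by positivity
  set j₀ := ⌊Real.logb 2 (1/h)⌋ with hj₀
  have hj₀l : (2:ℝ)^j₀ ≤ 1/h := by
    have h1 : ((j₀:ℤ):ℝ) ≤ Real.logb 2 (1/h) := Int.floor_le _
    calc (2:ℝ)^j₀ = (2:ℝ)^((j₀:ℤ):ℝ) := (Real.rpow_intCast 2 j₀).symm
      _ ≤ (2:ℝ)^(Real.logb 2 (1/h)) := Real.rpow_le_rpow_of_exponent_le one_le_two h1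
      _ = 1/h := Real.rpow_logb (by norm_num) (by norm_num) (by positivity)
  have hj₀r : 1/h < (2:ℝ)^(j₀+1) := by
    have h1 : Real.logb 2 (1/h) < ((j₀+1:ℤ):ℝ) := by
      push_cast
      exact Int.lt_floor_add_one _
    calc 1/h = (2:ℝ)^(Real.logb 2 (1/h)) :=
          (Real.rpow_logb (by norm_num) (by norm_num) (by positivity)).symm
      _ < (2:ℝ)^(((j₀+1:ℤ)):ℝ) := Real.rpow_lt_rpow_of_exponent_lt one_lt_two h1
      _ = (2:ℝ)^(j₀+1) := Real.rpow_intCast 2 (j₀+1)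
  have hhle : h ≤ (2:ℝ)^(-j₀) := by
    have h2 : h * (2:ℝ)^j₀ ≤ 1 := by
      have h3 := mul_le_mul_of_nonneg_left hj₀l hh.le
      rwa [mul_one_div, div_self (ne_of_gt hh)] at h3
    have h4 := mul_le_mul_of_nonneg_right h2 (two_zpow_pos (-j₀)).le
    rwa [mul_assoc, ← zpow_add₀ (by norm_num : (2:ℝ) ≠ 0), add_neg_cancel, zpow_zero,
      mul_one, one_mul] at h4
  have hlth : (2:ℝ)^(-j₀) < 2*h := by
    have h1 : 1 < 2*h * (2:ℝ)^j₀ := by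
      have h2 := mul_lt_mul_of_pos_left hj₀r hh
      rw [mul_one_div, div_self (ne_of_gt hh), zpow_add₀ (by norm_num : (2:ℝ) ≠ 0) j₀ 1,
        zpow_one] at h2
      nlinarith [h2]
    have h3 := mul_lt_mul_of_pos_right h1 (two_zpow_pos (-j₀))
    rwa [one_mul, mul_assoc, ← zpow_add₀ (by norm_num : (2:ℝ) ≠ 0), add_neg_cancel,
      zpow_zero, mul_one] at h3
  set R := 3 * A * Real.sqrt ((5 + ε + 1/ε) * D) * Real.sqrt ((2:ℝ)^(-j₀)) with hR
  have hR0 : 0 ≤ R := by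
    rw [hR]
    apply mul_nonneg (mul_nonneg (by linarith) (Real.sqrt_nonneg _)) (Real.sqrt_nonneg _)
  -- step estimate
  have hstep : ∀ (jj : ℤ) (k : ℕ), j₀ ≤ jj → (k:ℝ) * (2:ℝ)^(-jj) ≤ t →
      A * Real.sqrt ((2:ℝ)^(-jj)) * Real.sqrt (gfun jj k)
        ≤ R * (2:ℝ)^(-(((jj - j₀ : ℤ)):ℝ)/4) := by
    intro jj k hjj hk
    set i := ((jj - j₀:ℤ):ℝ) with hi
    have hi0 : 0 ≤ i := by rw [hi]; exact_mod_cast sub_nonneg.mpr hjj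
    have hg := gfun_bound hε hh hht hjj hj₀l hj₀r hk
    have h1 : Real.sqrt (gfun jj k) ≤ Real.sqrt ((5+ε+1/ε) * D) * (3 * (2:ℝ)^(i/4)) := by
      calc Real.sqrt (gfun jj k) ≤ Real.sqrt ((5+ε+1/ε)*D*(1+i)) := by
            apply Real.sqrt_le_sqrt
            rw [hi]
            exact hg
        _ = Real.sqrt ((5+ε+1/ε)*D) * Real.sqrt (1+i) := by
            rw [Real.sqrt_mul (by positivity)]
        _ ≤ _ := mul_le_mul_of_nonneg_left (sqrt_one_add_le hi0) (Real.sqrt_nonneg _)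
    have h2 : Real.sqrt ((2:ℝ)^(-jj)) = Real.sqrt ((2:ℝ)^(-j₀)) * (2:ℝ)^(-i/2) := by
      have e1 : (2:ℝ)^(-jj) = (2:ℝ)^(-j₀) * (2:ℝ)^(-(jj - j₀)) := by
        rw [← zpow_add₀ (by norm_num : (2:ℝ) ≠ 0)]
        congr 1
        ring
      rw [e1, Real.sqrt_mul (two_zpow_pos _).le]
      congr 1
      rw [show ((2:ℝ)^(-(jj-j₀):ℤ)) = (2:ℝ)^(((-(jj-j₀):ℤ)):ℝ) from (Real.rpow_intCast 2 _).symm,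
        Real.sqrt_eq_rpow, ← Real.rpow_mul (by norm_num : (0:ℝ) ≤ 2)]
      congr 1
      rw [hi]
      push_cast
      ring
    calc A * Real.sqrt ((2:ℝ)^(-jj)) * Real.sqrt (gfun jj k)
        ≤ A * (Real.sqrt ((2:ℝ)^(-j₀)) * (2:ℝ)^(-i/2)) * (Real.sqrt ((5+ε+1/ε)*D) * (3*(2:ℝ)^(i/4))) := by
          rw [h2]
          apply mul_le_mul_of_nonneg_left h1
          apply mul_nonneg hA
          positivity
      _ = R * ((2:ℝ)^(-i/2) * (2:ℝ)^(i/4)) := by rw [hR]; ring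
      _ = R * (2:ℝ)^(-i/4) := by
          rw [← Real.rpow_add (by norm_num : (0:ℝ) < 2)]
          congr 1
          ring
  -- telescoping tail bound
  have htail : ∀ x : ℝ, 0 ≤ x → x ≤ t → |f x - f (dy x j₀)| ≤ 6 * R := by
    intro x hx hxt
    have hq : (7:ℝ)/6 ≤ (2:ℝ)^((1:ℝ)/4) := by
      have h1 : ((7:ℝ)/6)^(4:ℕ) ≤ 2 := by norm_num
      calc (7:ℝ)/6 = (((7:ℝ)/6)^(4:ℕ))^((1:ℝ)/4) := by
            rw [← Real.rpow_natCast (7/6) 4, ← Real.rpow_mul (by norm_num)]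
            norm_num
        _ ≤ 2^((1:ℝ)/4) := Real.rpow_le_rpow (by positivity) h1 (by norm_num)
    have hchain : ∀ n : ℕ, |f (dy x (j₀ + n)) - f (dy x j₀)| ≤ 6 * R * (1 - (2:ℝ)^(-(n:ℝ)/4)) := by
      intro n
      induction n with
      | zero => simp
      | succ n ih =>
        obtain ⟨k, hk1, hk2⟩ := dy_step f A hA Hf x hx (j₀ + n)
        have hklet : (k:ℝ) * (2:ℝ)^(-(j₀ + (n:ℤ) + 1)) ≤ t := by
          calc (k:ℝ) * (2:ℝ)^(-(j₀ + (n:ℤ) + 1)) ≤ x := hk1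
            _ ≤ t := hxt
        have hs := hstep (j₀ + (n:ℤ) + 1) k (by omega) hklet
        have hic : ((j₀ + (n:ℤ) + 1 - j₀ : ℤ):ℝ) = (n:ℝ) + 1 := by push_cast; ring
        rw [hic] at hs
        have hstep2 : |f (dy x (j₀ + (n:ℤ) + 1)) - f (dy x (j₀ + (n:ℤ)))|
            ≤ R * (2:ℝ)^(-((n:ℝ)+1)/4) := hk2.trans hs
        have hcast : (j₀ + ((n+1:ℕ):ℤ)) = (j₀ + (n:ℤ)) + 1 := by push_cast; ring
        have htri : |f (dy x (j₀ + ((n+1:ℕ):ℤ))) - f (dy x j₀)|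
            ≤ |f (dy x (j₀ + (n:ℤ) + 1)) - f (dy x (j₀ + (n:ℤ)))|
              + |f (dy x (j₀ + (n:ℤ))) - f (dy x j₀)| := by
          rw [hcast]
          exact abs_sub_le _ _ _
        -- numeric inequality
        have hnum : R * (2:ℝ)^(-((n:ℝ)+1)/4) + 6*R*(1 - (2:ℝ)^(-(n:ℝ)/4))
            ≤ 6*R*(1 - (2:ℝ)^(-(((n+1:ℕ)):ℝ)/4)) := by
          have e1 : (2:ℝ)^(-((n:ℝ)+1)/4) = (2:ℝ)^(-(n:ℝ)/4) * (2:ℝ)^(-(1:ℝ)/4) := by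
            rw [← Real.rpow_add (by norm_num : (0:ℝ) < 2)]
            congr 1
            ring
          have e2 : (-(((n+1:ℕ)):ℝ)/4) = -((n:ℝ)+1)/4 := by push_cast; ring
          rw [e2, e1]
          have hb : (2:ℝ)^(-(1:ℝ)/4) ≤ 6/7 := by
            have hbi : (2:ℝ)^(-(1:ℝ)/4) = ((2:ℝ)^((1:ℝ)/4))⁻¹ := by
              rw [← Real.rpow_neg (by norm_num : (0:ℝ) ≤ 2)]
              congr 1
              ring
            rw [hbi]
            rw [inv_le_comm₀ (by positivity) (by norm_num)]
            calc (6/7:ℝ)⁻¹ = 7/6 := by norm_num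
              _ ≤ (2:ℝ)^((1:ℝ)/4) := hq
          have ha0 : (0:ℝ) ≤ (2:ℝ)^(-(n:ℝ)/4) := by positivity
          nlinarith [mul_nonneg hR0 ha0, mul_nonneg (mul_nonneg hR0 ha0) (by positivity : (0:ℝ) ≤ (2:ℝ)^(-(1:ℝ)/4))]
        calc |f (dy x (j₀ + ((n+1:ℕ):ℤ))) - f (dy x j₀)|
            ≤ |f (dy x (j₀ + (n:ℤ) + 1)) - f (dy x (j₀ + (n:ℤ)))|
              + |f (dy x (j₀ + (n:ℤ))) - f (dy x j₀)| := htri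
          _ ≤ R * (2:ℝ)^(-((n:ℝ)+1)/4) + 6*R*(1 - (2:ℝ)^(-(n:ℝ)/4)) := add_le_add hstep2 ih
          _ ≤ _ := hnum
    have hconv : Tendsto (fun n : ℕ => dy x (j₀ + n)) atTop (𝓝 x) := by
      rw [← tendsto_sub_nhds_zero_iff]
      apply squeeze_zero_norm (a := fun n : ℕ => (2:ℝ)^(-j₀) * (1/2:ℝ)^n)
      · intro n
        have e : (2:ℝ)^(-(j₀+(n:ℤ))) = (2:ℝ)^(-j₀) * (1/2:ℝ)^n := by
          rw [neg_add, zpow_add₀ (by norm_num : (2:ℝ) ≠ 0)]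
          congr 1
          rw [zpow_neg, zpow_natCast, one_div, inv_pow]
        have h1 : dy x (j₀ + n) ≤ x := dy_le _
        have h2 : x - (2:ℝ)^(-(j₀+(n:ℤ))) < dy x (j₀ + n) := lt_dy_add _
        rw [Real.norm_eq_abs, abs_le]
        constructor
        · rw [← e]; linarith
        · linarith [ (two_zpow_pos (-(j₀+(n:ℤ)))).le, e ▸ (two_zpow_pos (-(j₀+(n:ℤ)))).le ]
      · have h3 : Tendsto (fun n : ℕ => (1/2:ℝ)^n) atTop (𝓝 0) :=
          tendsto_pow_atTop_nhds_zero_of_lt_one (by norm_num) (by norm_num)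
        simpa using h3.const_mul ((2:ℝ)^(-j₀))
    have hfc : Tendsto (fun n : ℕ => |f (dy x (j₀ + n)) - f (dy x j₀)|) atTop
        (𝓝 |f x - f (dy x j₀)|) :=
      (((hf.tendsto x).comp hconv).sub tendsto_const_nhds).abs
    apply le_of_tendsto hfc
    apply Filter.Eventually.of_forall
    intro n
    have := hchain n
    have h0 : (0:ℝ) ≤ (2:ℝ)^(-(n:ℝ)/4) := by positivity
    nlinarith [mul_nonneg hR0 h0]
  -- middle term
  have hmid : |f (dy v j₀) - f (dy u j₀)| ≤ R := by
    have hzp := two_zpow_pos j₀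
    have hm0 : ⌊(2:ℝ)^j₀ * u⌋ ≤ ⌊(2:ℝ)^j₀ * v⌋ :=
      Int.floor_le_floor (by nlinarith)
    have hm1 : ⌊(2:ℝ)^j₀ * v⌋ ≤ ⌊(2:ℝ)^j₀ * u⌋ + 1 := by
      have hle1 : (2:ℝ)^j₀ * v ≤ (2:ℝ)^j₀ * u + 1 := by
        have hh3 : (2:ℝ)^j₀ * h ≤ 1 := by
          have h4 := mul_le_mul_of_nonneg_left hhle hzp.le
          rwa [zpow_neg, mul_inv_cancel₀ (ne_of_gt hzp)] at h4
        nlinarith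
      calc ⌊(2:ℝ)^j₀ * v⌋ ≤ ⌊(2:ℝ)^j₀ * u + 1⌋ := Int.floor_le_floor hle1
        _ = ⌊(2:ℝ)^j₀ * u⌋ + 1 := Int.floor_add_one _
    have hcases : ⌊(2:ℝ)^j₀ * v⌋ = ⌊(2:ℝ)^j₀ * u⌋ ∨ ⌊(2:ℝ)^j₀ * v⌋ = ⌊(2:ℝ)^j₀ * u⌋ + 1 := by
      omega
    rcases hcases with hc | hc
    · have : dy v j₀ = dy u j₀ := by unfold dy; rw [hc]
      rw [this, sub_self, abs_zero]
      exact hR0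
    · have hfl0 : (0:ℤ) ≤ ⌊(2:ℝ)^j₀ * u⌋ := Int.floor_nonneg.mpr (by positivity)
      set k := (⌊(2:ℝ)^j₀ * u⌋).toNat with hk
      have hkc : ((k:ℕ):ℝ) = ((⌊(2:ℝ)^j₀ * u⌋:ℤ):ℝ) := by
        rw [hk]; exact_mod_cast Int.toNat_of_nonneg hfl0
      have hdu : dy u j₀ = (k:ℝ) * (2:ℝ)^(-j₀) := by unfold dy; rw [hkc]
      have hdv : dy v j₀ = ((k:ℝ)+1) * (2:ℝ)^(-j₀) := by
        unfold dy; rw [hc, hkc]; push_cast; ring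
      have hkt : (k:ℝ) * (2:ℝ)^(-j₀) ≤ t := by
        rw [← hdu]
        calc dy u j₀ ≤ u := dy_le _
          _ ≤ t := le_trans huv.le hvt
      have := (hdv ▸ hdu ▸ Hf j₀ k).trans (hstep j₀ k le_rfl hkt)
      simpa using this
  -- assemble
  have h13 : |f v - f u| ≤ 13 * R := by
    have h1 := htail u hu (le_trans huv.le hvt)
    have h2 := htail v (le_trans hu huv.le) hvt
    have h3 : |f (dy u j₀) - f u| = |f u - f (dy u j₀)| := abs_sub_comm _ _
    calc |f v - f u| ≤ |f v - f (dy v j₀)| + |f (dy v j₀) - f u| := abs_sub_le _ _ _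
      _ ≤ |f v - f (dy v j₀)| + (|f (dy v j₀) - f (dy u j₀)| + |f (dy u j₀) - f u|) := by
          linarith [abs_sub_le (f (dy v j₀)) (f (dy u j₀)) (f u)]
      _ ≤ 6*R + (R + 6*R) := by
          rw [h3] at *
          linarith [h1, h2, hmid]
      _ = 13 * R := by ring
  have hw : w ε t h = Real.sqrt (h * D) := by
    unfold w
    rw [min_eq_right hht.le, hD]
  calc |f v - f u| ≤ 13 * R := h13
    _ = 39 * A * (Real.sqrt ((5+ε+1/ε)*D) * Real.sqrt ((2:ℝ)^(-j₀))) := by rw [hR]; ring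
    _ ≤ 39 * A * (Real.sqrt ((5+ε+1/ε)*D) * Real.sqrt (2*h)) := by
        apply mul_le_mul_of_nonneg_left _ (by linarith)
        exact mul_le_mul_of_nonneg_left (Real.sqrt_le_sqrt hlth.le) (Real.sqrt_nonneg _)
    _ = (39 * Real.sqrt (2 * (5 + ε + 1/ε))) * A * w ε t h := by
        rw [hw, ← Real.sqrt_mul (by positivity : (0:ℝ) ≤ (5+ε+1/ε)*D)]
        rw [show (5+ε+1/ε)*D*(2*h) = (2*(5+ε+1/ε))*(h*D) by ring]
        rw [Real.sqrt_mul (by positivity)]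
        ring

end BMaux


/-- **Corollary (uniform control of the modulus of continuity).**
There is a nonnegative random variable `M_B` whose square admits exponential moments
such that, almost surely, for all `0 < h < t < ∞`, the modulus of continuity satisfies
`ω_B(t,h) ≤ M_B · w(t,h)`, i.e. `|B_v − B_u| ≤ M_B · w(t,h)` for all
`0 ≤ u < v ≤ t` with `v − u ≤ h`. -/
theorem brownian_modulus_of_continuity_bound
    {Ω : Type*} [MeasurableSpace Ω] (P : Measure Ω) [IsProbabilityMeasure P]
    (B : ℝ → Ω → ℝ) (hB : IsBrownianMotion P B) (ε : ℝ) (hε : 0 < ε) :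
    ∃ M : Ω → ℝ, (∀ ω, 0 ≤ M ω) ∧
      (∃ lam : ℝ, 0 < lam ∧
        ∫⁻ ω, ENNReal.ofReal (Real.exp (lam * (M ω) ^ 2)) ∂P < ⊤) ∧
      (∀ᵐ ω ∂P, ∀ t h : ℝ, 0 < h → h < t →
        ∀ u v : ℝ, 0 ≤ u → u < v → v ≤ t → v - u ≤ h →
          |B v ω - B u ω| ≤ M ω * w ε t h) := by
  obtain ⟨hmeas, hzero, hcont, hlaw, hindep⟩ := hB
  classical
  set Cfin := 39 * Real.sqrt (2 * (5 + ε + 1/ε)) with hCfin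
  have hCe0 : (0:ℝ) < 2 * (5 + ε + 1/ε) := by positivity
  have hCfin0 : 0 < Cfin := by rw [hCfin]; positivity
  -- increments
  set Δ : ℤ → ℕ → Ω → ℝ :=
    fun j k ω => B (((k:ℝ)+1) * (2:ℝ)^(-j)) ω - B ((k:ℝ) * (2:ℝ)^(-j)) ω with hΔdef
  have hΔmeas : ∀ (j : ℤ) (k : ℕ), Measurable (Δ j k) := fun j k => (hmeas _).sub (hmeas _)
  have hΔlaw : ∀ (j : ℤ) (k : ℕ),
      P.map (Δ j k) = gaussianReal 0 (((2:ℝ)^(-j)).toNNReal) := by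
    intro j k
    have h1 := hlaw ((k:ℝ) * (2:ℝ)^(-j)) (((k:ℝ)+1) * (2:ℝ)^(-j))
      (by positivity) (by nlinarith [two_zpow_pos (-j)])
    rw [show ((k:ℝ)+1) * (2:ℝ)^(-j) - (k:ℝ) * (2:ℝ)^(-j) = (2:ℝ)^(-j) by ring] at h1
    exact h1
  have hgd : ∀ (j : ℤ) (k : ℕ), 0 < Real.sqrt ((2:ℝ)^(-j)) * Real.sqrt (gfun j k) := by
    intro j k
    apply mul_pos (Real.sqrt_pos.mpr (two_zpow_pos (-j)))
      (Real.sqrt_pos.mpr (by linarith [gfun_ge_two j k]))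
  -- the exponential functionals
  set F : ℤ × ℕ → Ω → ℝ := fun p ω =>
    if 3 * (Real.sqrt ((2:ℝ)^(-p.1)) * Real.sqrt (gfun p.1 p.2)) ≤ |Δ p.1 p.2 ω|
    then Real.exp ((Δ p.1 p.2 ω)^2 / (16 * ((2:ℝ)^(-p.1) * gfun p.1 p.2))) else 0 with hFdef
  have hφmeas : ∀ p : ℤ × ℕ, Measurable fun x : ℝ => ENNReal.ofReal
      (if 3 * (Real.sqrt ((2:ℝ)^(-p.1)) * Real.sqrt (gfun p.1 p.2)) ≤ |x|
       then Real.exp (x^2 / (16 * ((2:ℝ)^(-p.1) * gfun p.1 p.2))) else 0) := by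
    intro p
    apply Measurable.ennreal_ofReal
    exact Measurable.ite (measurableSet_le measurable_const measurable_abs)
      (by fun_prop) measurable_const
  have hFmeas : ∀ p : ℤ × ℕ, Measurable fun ω => ENNReal.ofReal (F p ω) := by
    intro p
    exact (hφmeas p).comp (hΔmeas p.1 p.2)
  have hFint : ∀ p : ℤ × ℕ, ∫⁻ ω, ENNReal.ofReal (F p ω) ∂P
      ≤ ENNReal.ofReal (Real.sqrt 2 * Real.exp (-(9/8) * gfun p.1 p.2)) := by
    intro p
    have hgb := gaussian_exp_bound ((2:ℝ)^(-p.1)) (gfun p.1 p.2)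
      (two_zpow_pos _) (gfun_ge_two _ _)
    rw [← hΔlaw p.1 p.2, lintegral_map (hφmeas p) (hΔmeas p.1 p.2)] at hgb
    exact hgb
  -- the supremum
  set T : Ω → ENNReal := fun ω => ⨆ (j : ℤ) (k : ℕ),
    ENNReal.ofReal (|Δ j k ω| / (Real.sqrt ((2:ℝ)^(-j)) * Real.sqrt (gfun j k))) with hTdef
  -- pointwise comparison
  have hptw : ∀ ω, ENNReal.ofReal (Real.exp ((T ω).toReal^2 / 64))
      ≤ ENNReal.ofReal (Real.exp (1/4)) + ∑' p : ℤ × ℕ, ENNReal.ofReal (F p ω) := by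
    intro ω
    rcases le_or_gt ((T ω).toReal) 4 with hcase | hcase
    · have h1 : ENNReal.ofReal (Real.exp ((T ω).toReal^2 / 64))
          ≤ ENNReal.ofReal (Real.exp (1/4)) := by
        apply ENNReal.ofReal_le_ofReal
        apply Real.exp_le_exp.mpr
        nlinarith [ENNReal.toReal_nonneg (a := T ω)]
      exact h1.trans le_self_add
    · have hs0 : (0:ℝ) ≤ (T ω).toReal := ENNReal.toReal_nonneg
      have hTne : T ω ≠ ⊤ := by
        intro hTeq
        rw [hTeq] at hcase
        simp at hcase
        linarith
      have hlt : ENNReal.ofReal ((T ω).toReal - 1) < T ω := by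
        conv_rhs => rw [← ENNReal.ofReal_toReal hTne]
        exact (ENNReal.ofReal_lt_ofReal_iff (by linarith)).mpr (by linarith)
      rw [hTdef] at hlt
      simp only [lt_iSup_iff] at hlt
      obtain ⟨j, k, hk⟩ := hlt
      have hZgt : (T ω).toReal - 1 < |Δ j k ω| / (Real.sqrt ((2:ℝ)^(-j)) * Real.sqrt (gfun j k)) :=
        (ENNReal.ofReal_lt_ofReal_iff_of_nonneg (by linarith)).mp hk
      set Zv := |Δ j k ω| / (Real.sqrt ((2:ℝ)^(-j)) * Real.sqrt (gfun j k)) with hZv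
      have hZ3 : 3 < Zv := by linarith
      have hcond : 3 * (Real.sqrt ((2:ℝ)^(-j)) * Real.sqrt (gfun j k)) ≤ |Δ j k ω| := by
        rw [hZv, lt_div_iff₀ (hgd j k)] at hZ3
        linarith
      have hFval : F (j,k) ω = Real.exp ((Δ j k ω)^2 / (16 * ((2:ℝ)^(-j) * gfun j k))) := by
        rw [hFdef]
        exact if_pos hcond
      have hZsq : Zv^2 = (Δ j k ω)^2 / ((2:ℝ)^(-j) * gfun j k) := by
        rw [hZv, div_pow, mul_pow, Real.sq_sqrt (two_zpow_pos (-j)).le,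
          Real.sq_sqrt (by linarith [gfun_ge_two j k]), sq_abs]
      have hexp : Real.exp ((T ω).toReal^2/64) ≤ F (j,k) ω := by
        rw [hFval]
        apply Real.exp_le_exp.mpr
        rw [show (Δ j k ω)^2 / (16 * ((2:ℝ)^(-j) * gfun j k))
            = Zv^2 / 16 by rw [hZsq]; ring]
        nlinarith [hZgt, hZ3, hs0, sq_nonneg (Zv - 3)]
      calc ENNReal.ofReal (Real.exp ((T ω).toReal^2/64))
          ≤ ENNReal.ofReal (F (j,k) ω) := ENNReal.ofReal_le_ofReal hexp
        _ ≤ ∑' p : ℤ × ℕ, ENNReal.ofReal (F p ω) := ENNReal.le_tsum (j,k)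
        _ ≤ _ := le_add_self
  -- the exponential moment bound
  have hmom : ∫⁻ ω, ENNReal.ofReal (Real.exp ((T ω).toReal^2/64)) ∂P < ⊤ := by
    have h1 : ∫⁻ ω, ENNReal.ofReal (Real.exp ((T ω).toReal^2/64)) ∂P
        ≤ ENNReal.ofReal (Real.exp (1/4))
          + ∑' p : ℤ × ℕ, ENNReal.ofReal (Real.sqrt 2 * Real.exp (-(9/8) * gfun p.1 p.2)) := by
      calc ∫⁻ ω, ENNReal.ofReal (Real.exp ((T ω).toReal^2/64)) ∂P
          ≤ ∫⁻ ω, (ENNReal.ofReal (Real.exp (1/4))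
              + ∑' p : ℤ × ℕ, ENNReal.ofReal (F p ω)) ∂P := lintegral_mono hptw
        _ = ENNReal.ofReal (Real.exp (1/4))
              + ∑' p : ℤ × ℕ, ∫⁻ ω, ENNReal.ofReal (F p ω) ∂P := by
            rw [lintegral_add_left measurable_const, lintegral_const, measure_univ, mul_one,
              lintegral_tsum (fun p => (hFmeas p).aemeasurable)]
        _ ≤ _ := add_le_add_right (ENNReal.tsum_le_tsum hFint) _
    exact lt_of_le_of_lt h1 (ENNReal.add_lt_top.mpr ⟨ENNReal.ofReal_lt_top, Ctot_lt_top⟩)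
  -- almost sure finiteness of T
  have hTfin : ∀ᵐ ω ∂P, T ω < ⊤ := by
    have key : ∀ n : ℕ, P {ω | T ω = ⊤}
        ≤ ENNReal.ofReal (Real.exp (-(((n:ℝ)+4)^2/16)))
          * ∑' p : ℤ × ℕ, ENNReal.ofReal (Real.sqrt 2 * Real.exp (-(9/8) * gfun p.1 p.2)) := by
      intro n
      set a := Real.exp (((n:ℝ)+4)^2/16) with ha
      have ha0 : 0 < a := Real.exp_pos _
      have hsubset : {ω | T ω = ⊤}
          ⊆ ⋃ p : ℤ × ℕ, {ω | ENNReal.ofReal a ≤ ENNReal.ofReal (F p ω)} := by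
        intro ω hω
        rw [Set.mem_setOf_eq] at hω
        have hlt : ENNReal.ofReal ((n:ℝ)+4) < T ω := by
          rw [hω]; exact ENNReal.ofReal_lt_top
        rw [hTdef] at hlt
        simp only [lt_iSup_iff] at hlt
        obtain ⟨j, k, hk⟩ := hlt
        have hZgt : (n:ℝ)+4 < |Δ j k ω| / (Real.sqrt ((2:ℝ)^(-j)) * Real.sqrt (gfun j k)) :=
          (ENNReal.ofReal_lt_ofReal_iff_of_nonneg (by positivity)).mp hk
        set Zv := |Δ j k ω| / (Real.sqrt ((2:ℝ)^(-j)) * Real.sqrt (gfun j k)) with hZv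
        have hZ3 : 3 < Zv := by
          have : (0:ℝ) ≤ (n:ℝ) := Nat.cast_nonneg n
          linarith
        have hcond : 3 * (Real.sqrt ((2:ℝ)^(-j)) * Real.sqrt (gfun j k)) ≤ |Δ j k ω| := by
          rw [hZv, lt_div_iff₀ (hgd j k)] at hZ3
          linarith
        have hFval : F (j,k) ω = Real.exp ((Δ j k ω)^2 / (16 * ((2:ℝ)^(-j) * gfun j k))) := by
          rw [hFdef]; exact if_pos hcond
        have hZsq : Zv^2 = (Δ j k ω)^2 / ((2:ℝ)^(-j) * gfun j k) := by
          rw [hZv, div_pow, mul_pow, Real.sq_sqrt (two_zpow_pos (-j)).le,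
            Real.sq_sqrt (by linarith [gfun_ge_two j k]), sq_abs]
        have hFa : a ≤ F (j,k) ω := by
          rw [hFval, ha]
          apply Real.exp_le_exp.mpr
          rw [show (Δ j k ω)^2 / (16 * ((2:ℝ)^(-j) * gfun j k)) = Zv^2/16 by rw [hZsq]; ring]
          have hn0 : (0:ℝ) ≤ (n:ℝ) := Nat.cast_nonneg n
          nlinarith [hZgt, hZ3]
        exact Set.mem_iUnion.mpr ⟨(j,k), ENNReal.ofReal_le_ofReal hFa⟩
      have hstep2 : ∀ p : ℤ × ℕ, P {ω | ENNReal.ofReal a ≤ ENNReal.ofReal (F p ω)}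
          ≤ ENNReal.ofReal (Real.exp (-(((n:ℝ)+4)^2/16)))
            * ENNReal.ofReal (Real.sqrt 2 * Real.exp (-(9/8) * gfun p.1 p.2)) := by
        intro p
        have hmk := mul_meas_ge_le_lintegral₀ (μ := P) (hFmeas p).aemeasurable (ENNReal.ofReal a)
        have hane : ENNReal.ofReal a ≠ 0 := by
          simp only [ne_eq, ENNReal.ofReal_eq_zero, not_le]
          exact ha0
        have h2 : P {ω | ENNReal.ofReal a ≤ ENNReal.ofReal (F p ω)}
            ≤ (ENNReal.ofReal a)⁻¹ * ∫⁻ ω, ENNReal.ofReal (F p ω) ∂P := by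
          rw [mul_comm] at hmk
          rw [← ENNReal.le_div_iff_mul_le (Or.inl hane) (Or.inl ENNReal.ofReal_ne_top)] at hmk
          rwa [ENNReal.div_eq_inv_mul] at hmk
        have h3 : (ENNReal.ofReal a)⁻¹ = ENNReal.ofReal (Real.exp (-(((n:ℝ)+4)^2/16))) := by
          rw [ha, ← ENNReal.ofReal_inv_of_pos ha0]
          congr 1
          rw [← Real.exp_neg]
        calc P {ω | ENNReal.ofReal a ≤ ENNReal.ofReal (F p ω)}
            ≤ (ENNReal.ofReal a)⁻¹ * ∫⁻ ω, ENNReal.ofReal (F p ω) ∂P := h2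
          _ ≤ (ENNReal.ofReal a)⁻¹
              * ENNReal.ofReal (Real.sqrt 2 * Real.exp (-(9/8) * gfun p.1 p.2)) :=
              mul_le_mul_right (hFint p) _
          _ = _ := by rw [h3]
      calc P {ω | T ω = ⊤}
          ≤ P (⋃ p : ℤ × ℕ, {ω | ENNReal.ofReal a ≤ ENNReal.ofReal (F p ω)}) :=
            measure_mono hsubset
        _ ≤ ∑' p : ℤ × ℕ, P {ω | ENNReal.ofReal a ≤ ENNReal.ofReal (F p ω)} :=
            measure_iUnion_le _
        _ ≤ ∑' p : ℤ × ℕ, ENNReal.ofReal (Real.exp (-(((n:ℝ)+4)^2/16)))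
            * ENNReal.ofReal (Real.sqrt 2 * Real.exp (-(9/8) * gfun p.1 p.2)) :=
            ENNReal.tsum_le_tsum hstep2
        _ = _ := ENNReal.tsum_mul_left
    -- conclude P {T = ⊤} = 0
    set Ct := ∑' p : ℤ × ℕ, ENNReal.ofReal (Real.sqrt 2 * Real.exp (-(9/8) * gfun p.1 p.2))
      with hCt
    have hCtne : Ct ≠ ⊤ := Ctot_lt_top.ne
    set q := P {ω | T ω = ⊤} with hq
    have hqne : q ≠ ⊤ := measure_ne_top P _
    have hreal : ∀ n : ℕ, q.toReal ≤ Real.exp (-(((n:ℝ)+4)^2/16)) * Ct.toReal := by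
      intro n
      have h1 := key n
      have h2 : (ENNReal.ofReal (Real.exp (-(((n:ℝ)+4)^2/16))) * Ct) ≠ ⊤ :=
        ENNReal.mul_ne_top ENNReal.ofReal_ne_top hCtne
      calc q.toReal ≤ (ENNReal.ofReal (Real.exp (-(((n:ℝ)+4)^2/16))) * Ct).toReal :=
            ENNReal.toReal_mono h2 h1
        _ = Real.exp (-(((n:ℝ)+4)^2/16)) * Ct.toReal := by
            rw [ENNReal.toReal_mul, ENNReal.toReal_ofReal (Real.exp_pos _).le]
    have hlim : Tendsto (fun n : ℕ => Real.exp (-(((n:ℝ)+4)^2/16)) * Ct.toReal)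
        atTop (𝓝 0) := by
      apply squeeze_zero (fun n => by positivity)
        (g := fun n : ℕ => (Real.exp (-1))^n * Ct.toReal)
      · intro n
        apply mul_le_mul_of_nonneg_right _ ENNReal.toReal_nonneg
        rw [← Real.exp_nat_mul]
        apply Real.exp_le_exp.mpr
        have : (0:ℝ) ≤ (n:ℝ) := Nat.cast_nonneg n
        nlinarith [sq_nonneg ((n:ℝ) - 4)]
      · have hgeo : Tendsto (fun n : ℕ => (Real.exp (-1))^n) atTop (𝓝 0) :=
          tendsto_pow_atTop_nhds_zero_of_lt_one (Real.exp_pos _).le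
            (by rw [Real.exp_lt_one_iff]; norm_num)
        simpa using hgeo.mul_const Ct.toReal
    have hq0 : q = 0 := by
      have hle : q.toReal ≤ 0 := ge_of_tendsto hlim (Filter.Eventually.of_forall hreal)
      have h0 : q.toReal = 0 := le_antisymm hle ENNReal.toReal_nonneg
      rcases (ENNReal.toReal_eq_zero_iff q).mp h0 with h | h
      · exact h
      · exact absurd h hqne
    rw [ae_iff]
    have hset : {ω | ¬ T ω < ⊤} = {ω | T ω = ⊤} := by
      ext ω
      simp [lt_top_iff_ne_top]
    rw [hset]
    exact hq0
  -- conclusion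
  refine ⟨fun ω => Cfin * (T ω).toReal,
    fun ω => mul_nonneg hCfin0.le ENNReal.toReal_nonneg,
    ⟨1/(64*Cfin^2), by positivity, ?_⟩, ?_⟩
  · have hrw : ∀ ω : Ω, (1/(64*Cfin^2)) * (Cfin * (T ω).toReal)^2 = (T ω).toReal^2/64 := by
      intro ω
      field_simp
    simp_rw [hrw]
    exact hmom
  · filter_upwards [hTfin] with ω hω
    intro t h ht hht u v hu huv hvt hvuh
    have hA0 : 0 ≤ (T ω).toReal := ENNReal.toReal_nonneg
    have HfB : ∀ (j : ℤ) (k : ℕ),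
        |(fun x => B x ω) (((k:ℝ)+1) * (2:ℝ)^(-j)) - (fun x => B x ω) ((k:ℝ) * (2:ℝ)^(-j))|
          ≤ (T ω).toReal * Real.sqrt ((2:ℝ)^(-j)) * Real.sqrt (gfun j k) := by
      intro j k
      have h1 : ENNReal.ofReal (|Δ j k ω| / (Real.sqrt ((2:ℝ)^(-j)) * Real.sqrt (gfun j k)))
          ≤ T ω := by
        rw [hTdef]
        exact le_iSup₂ (f := fun (j : ℤ) (k : ℕ) => ENNReal.ofReal
          (|Δ j k ω| / (Real.sqrt ((2:ℝ)^(-j)) * Real.sqrt (gfun j k)))) j k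
      have h2 : |Δ j k ω| / (Real.sqrt ((2:ℝ)^(-j)) * Real.sqrt (gfun j k)) ≤ (T ω).toReal := by
        rw [← ENNReal.ofReal_toReal hω.ne] at h1
        exact (ENNReal.ofReal_le_ofReal_iff hA0).mp h1
      have h3 : |Δ j k ω| ≤ (T ω).toReal * (Real.sqrt ((2:ℝ)^(-j)) * Real.sqrt (gfun j k)) := by
        rw [div_le_iff₀ (hgd j k)] at h2
        exact h2
      calc |(fun x => B x ω) (((k:ℝ)+1) * (2:ℝ)^(-j)) - (fun x => B x ω) ((k:ℝ) * (2:ℝ)^(-j))|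
          = |Δ j k ω| := by rw [hΔdef]
        _ ≤ (T ω).toReal * (Real.sqrt ((2:ℝ)^(-j)) * Real.sqrt (gfun j k)) := h3
        _ = (T ω).toReal * Real.sqrt ((2:ℝ)^(-j)) * Real.sqrt (gfun j k) := by ring
    have := chaining (fun x => B x ω) (hcont ω) ((T ω).toReal) hA0 HfB ε hε
      t h u v ht hht hu huv hvt hvuh
    calc |B v ω - B u ω| = |(fun x => B x ω) v - (fun x => B x ω) u| := rfl
      _ ≤ (39 * Real.sqrt (2 * (5 + ε + 1/ε))) * (T ω).toReal * w ε t h := this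
      _ = Cfin * (T ω).toReal * w ε t h := by rw [hCfin]
end

section
/- Let B be a standard Brownian motion, 0 < ε < 1, and a > 0. Define the scaled Brownian motion B̃ by B̃_t := a^{−1/2} B_{a t} for all t ≥ 0. Then, almost surely, M_{B̃} := sup_{0 ≤ s < t < ∞} |B̃_t − B̃_s| / w(t, t − s) ≤ (1 + √(ε|ln a|)) · M_B, where M_B := sup_{0 ≤ s < t < ∞} |B_t − B_s| / w(t, t − s). -/
open MeasureTheory ProbabilityTheory

/-- `M_X(ω) := sup_{0 ≤ s < t < ∞} |X_t(ω) − X_s(ω)| / w(t, t − s)`. -/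
noncomputable def MSup {Ω : Type*} (ε : ℝ) (X : ℝ → Ω → ℝ) (ω : Ω) : ℝ :=
  sSup {r : ℝ | ∃ s t : ℝ, 0 ≤ s ∧ s < t ∧ r = |X t ω - X s ω| / w ε t (t - s)}

lemma w_nonneg (ε t h : ℝ) : 0 ≤ w ε t h := Real.sqrt_nonneg _

lemma w_pos {ε t h : ℝ} (hε : 0 ≤ ε) (ht : 0 < t) (hh : 0 < h) : 0 < w ε t h := by
  unfold w
  have hm : 0 < min t h := lt_min ht hh
  have h1 : 0 ≤ Real.log (t / min t h) :=
    Real.log_nonneg (by rw [le_div_iff₀ hm, one_mul]; exact min_le_left t h)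
  have h2 : 0 ≤ ε * |Real.log t| := mul_nonneg hε (abs_nonneg _)
  exact Real.sqrt_pos.mpr (mul_pos hm (by linarith))

lemma sqrt_one_add_le_s4 {x : ℝ} (hx : 0 ≤ x) : Real.sqrt (1 + x) ≤ 1 + Real.sqrt x := by
  have h1 : Real.sqrt (1 + x) ≤ Real.sqrt ((1 + Real.sqrt x) ^ 2) := by
    apply Real.sqrt_le_sqrt
    nlinarith [Real.sq_sqrt hx, Real.sqrt_nonneg x]
  calc Real.sqrt (1 + x) ≤ Real.sqrt ((1 + Real.sqrt x) ^ 2) := h1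
    _ = 1 + Real.sqrt x := Real.sqrt_sq (by positivity)

lemma w_scale {ε t h a : ℝ} (hε : 0 ≤ ε) (ht : 0 < t) (hh : 0 < h) (ha : 0 < a) :
    w ε (a * t) (a * h) ≤ Real.sqrt a * (1 + Real.sqrt (ε * |Real.log a|)) * w ε t h := by
  have hm : 0 < min t h := lt_min ht hh
  have hmin : min (a * t) (a * h) = a * min t h := by
    rcases le_total t h with h' | h' <;>
      simp [min_eq_left, min_eq_right, h', mul_le_mul_iff_right₀ ha, *]
  have hdiv : (a * t) / (a * min t h) = t / min t h := mul_div_mul_left _ _ ha.ne'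
  unfold w
  rw [hmin, hdiv]
  set m := min t h with hmdef
  set L := Real.log (t / m) with hLdef
  have hL : 0 ≤ L := Real.log_nonneg (by rw [le_div_iff₀ hm, one_mul]; exact min_le_left t h)
  have hlogat : |Real.log (a * t)| ≤ |Real.log a| + |Real.log t| := by
    rw [Real.log_mul ha.ne' ht.ne']; exact abs_add_le _ _
  set X := 1 + L + ε * |Real.log t| with hXdef
  have hεt : 0 ≤ ε * |Real.log t| := mul_nonneg hε (abs_nonneg _)
  have hεa : 0 ≤ ε * |Real.log a| := mul_nonneg hε (abs_nonneg _)
  have hX1 : 1 ≤ X := by simp only [hXdef]; linarith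
  have hstep : a * m * (1 + L + ε * |Real.log (a * t)|)
      ≤ (a * (1 + ε * |Real.log a|)) * (m * X) := by
    have h2 : ε * |Real.log (a * t)| ≤ ε * |Real.log t| + ε * |Real.log a| := by
      nlinarith
    have h1 : 1 + L + ε * |Real.log (a * t)| ≤ X * (1 + ε * |Real.log a|) := by
      simp only [hXdef]; nlinarith
    calc a * m * (1 + L + ε * |Real.log (a * t)|)
        ≤ a * m * (X * (1 + ε * |Real.log a|)) := by
          apply mul_le_mul_of_nonneg_left h1 (by positivity)
      _ = (a * (1 + ε * |Real.log a|)) * (m * X) := by ring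
  calc Real.sqrt (a * m * (1 + L + ε * |Real.log (a * t)|))
      ≤ Real.sqrt ((a * (1 + ε * |Real.log a|)) * (m * X)) := Real.sqrt_le_sqrt hstep
    _ = Real.sqrt (a * (1 + ε * |Real.log a|)) * Real.sqrt (m * X) :=
        Real.sqrt_mul (by positivity) _
    _ = Real.sqrt a * Real.sqrt (1 + ε * |Real.log a|) * Real.sqrt (m * X) := by
        rw [Real.sqrt_mul ha.le]
    _ ≤ Real.sqrt a * (1 + Real.sqrt (ε * |Real.log a|)) * Real.sqrt (m * X) := by
        apply mul_le_mul_of_nonneg_right _ (Real.sqrt_nonneg _)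
        exact mul_le_mul_of_nonneg_left (sqrt_one_add_le_s4 hεa) (Real.sqrt_nonneg _)

/-- **Corollary (scaled Brownian motion).** Let `B` be a standard Brownian motion,
`0 < ε < 1` and `a > 0`, and let `B̃_t := a^{-1/2} B_{a t}` be the scaled Brownian motion.
Then, almost surely, `M_{B̃} ≤ (1 + √(ε |ln a|)) · M_B`. -/
theorem scaled_brownian_MSup_bound
    {Ω : Type*} [MeasurableSpace Ω] (P : Measure Ω) [IsProbabilityMeasure P]
    (B : ℝ → Ω → ℝ) (hB : IsBrownianMotion P B) (ε : ℝ) (hε₀ : 0 < ε) (hε₁ : ε < 1)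
    (a : ℝ) (ha : 0 < a) (Btilde : ℝ → Ω → ℝ)
    (hBtilde : ∀ t ω, Btilde t ω = a ^ (-(1:ℝ)/2) * B (a * t) ω) :
    ∀ᵐ ω ∂P, MSup ε Btilde ω ≤ (1 + Real.sqrt (ε * |Real.log a|)) * MSup ε B ω := by
  apply Filter.Eventually.of_forall
  intro ω
  have hεnn : (0:ℝ) ≤ ε := hε₀.le
  have hsa : 0 < Real.sqrt a := Real.sqrt_pos.mpr ha
  set C := 1 + Real.sqrt (ε * |Real.log a|) with hCdef
  have hC1 : (1:ℝ) ≤ C := le_add_of_nonneg_right (Real.sqrt_nonneg _)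
  have hC0 : (0:ℝ) < C := lt_of_lt_of_le one_pos hC1
  have hrpow : a ^ (-(1:ℝ)/2) = (Real.sqrt a)⁻¹ := by
    rw [Real.sqrt_eq_rpow, ← Real.rpow_neg ha.le]
    norm_num
  -- forward comparison
  have hmain : ∀ s t : ℝ, 0 ≤ s → s < t →
      |Btilde t ω - Btilde s ω| / w ε t (t - s)
        ≤ C * (|B (a * t) ω - B (a * s) ω| / w ε (a * t) (a * t - a * s)) := by
    intro s t hs hst
    have ht : 0 < t := lt_of_le_of_lt hs hst
    have hh : 0 < t - s := sub_pos.mpr hst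
    have hats : a * t - a * s = a * (t - s) := by ring
    rw [hats]
    have hW1 : 0 < w ε t (t - s) := w_pos hεnn ht hh
    have hW2 : 0 < w ε (a * t) (a * (t - s)) := w_pos hεnn (mul_pos ha ht) (mul_pos ha hh)
    have key := w_scale hεnn ht hh ha
    have hBt : |Btilde t ω - Btilde s ω| = (Real.sqrt a)⁻¹ * |B (a * t) ω - B (a * s) ω| := by
      rw [hBtilde, hBtilde, hrpow, ← mul_sub, abs_mul,
        abs_of_nonneg (inv_nonneg.mpr (Real.sqrt_nonneg a))]
    rw [hBt, mul_div_assoc', div_le_div_iff₀ hW1 hW2]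
    set Δ := |B (a * t) ω - B (a * s) ω| with hΔdef
    have hΔ : 0 ≤ Δ := abs_nonneg _
    calc (Real.sqrt a)⁻¹ * Δ * w ε (a * t) (a * (t - s))
        ≤ (Real.sqrt a)⁻¹ * Δ * (Real.sqrt a * C * w ε t (t - s)) := by
          apply mul_le_mul_of_nonneg_left key (by positivity)
      _ = C * Δ * w ε t (t - s) := by
          field_simp
  -- reverse comparison
  have hrev : ∀ s' t' : ℝ, 0 ≤ s' → s' < t' →
      |B t' ω - B s' ω| / w ε t' (t' - s')
        ≤ C * (|Btilde (t' / a) ω - Btilde (s' / a) ω| / w ε (t' / a) (t' / a - s' / a)) := by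
    intro s' t' hs' hst'
    have ht' : 0 < t' := lt_of_le_of_lt hs' hst'
    have hh' : 0 < t' - s' := sub_pos.mpr hst'
    have e1 : t' / a - s' / a = (t' - s') / a := by ring
    rw [e1]
    have hW2 : 0 < w ε t' (t' - s') := w_pos hεnn ht' hh'
    have hW1 : 0 < w ε (t' / a) ((t' - s') / a) :=
      w_pos hεnn (div_pos ht' ha) (div_pos hh' ha)
    have key := w_scale hεnn ht' hh' (inv_pos.mpr ha)
    rw [inv_mul_eq_div, inv_mul_eq_div, Real.sqrt_inv, Real.log_inv, abs_neg] at key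
    -- key : w ε (t'/a) ((t'-s')/a) ≤ (√a)⁻¹ * C * w ε t' (t'-s')
    have hBt : |Btilde (t' / a) ω - Btilde (s' / a) ω|
        = (Real.sqrt a)⁻¹ * |B t' ω - B s' ω| := by
      have e2 : a * (t' / a) = t' := by field_simp
      have e3 : a * (s' / a) = s' := by field_simp
      rw [hBtilde, hBtilde, hrpow, e2, e3, ← mul_sub, abs_mul,
        abs_of_nonneg (inv_nonneg.mpr (Real.sqrt_nonneg a))]
    rw [hBt, mul_div_assoc', div_le_div_iff₀ hW2 hW1]
    set Δ := |B t' ω - B s' ω| with hΔdef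
    have hΔ : 0 ≤ Δ := abs_nonneg _
    calc Δ * w ε (t' / a) ((t' - s') / a)
        ≤ Δ * ((Real.sqrt a)⁻¹ * C * w ε t' (t' - s')) := by
          apply mul_le_mul_of_nonneg_left key hΔ
      _ = C * ((Real.sqrt a)⁻¹ * Δ) * w ε t' (t' - s') := by ring
  unfold MSup
  by_cases hbdd : BddAbove {r : ℝ | ∃ s t : ℝ, 0 ≤ s ∧ s < t ∧ r = |B t ω - B s ω| / w ε t (t - s)}
  · have hM : 0 ≤ sSup {r : ℝ | ∃ s t : ℝ, 0 ≤ s ∧ s < t ∧ r = |B t ω - B s ω| / w ε t (t - s)} := by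
      apply Real.sSup_nonneg
      rintro r ⟨s, t, hs, hst, rfl⟩
      exact div_nonneg (abs_nonneg _) (w_nonneg _ _ _)
    apply Real.sSup_le _ (by positivity)
    rintro r ⟨s, t, hs, hst, rfl⟩
    refine le_trans (hmain s t hs hst) ?_
    apply mul_le_mul_of_nonneg_left _ hC0.le
    exact le_csSup hbdd ⟨a * s, a * t, mul_nonneg ha.le hs,
      mul_lt_mul_of_pos_left hst ha, rfl⟩
  · have hbdd' : ¬ BddAbove {r : ℝ | ∃ s t : ℝ, 0 ≤ s ∧ s < t ∧
        r = |Btilde t ω - Btilde s ω| / w ε t (t - s)} := by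
      rintro ⟨M, hM⟩
      apply hbdd
      refine ⟨C * max M 0, ?_⟩
      rintro r ⟨s', t', hs', hst', rfl⟩
      refine le_trans (hrev s' t' hs' hst') ?_
      apply mul_le_mul_of_nonneg_left _ hC0.le
      refine le_trans (hM ?_) (le_max_left _ _)
      exact ⟨s' / a, t' / a, div_nonneg hs' ha.le, by gcongr, rfl⟩
    rw [Real.sSup_of_not_bddAbove hbdd, Real.sSup_of_not_bddAbove hbdd', mul_zero]
end
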